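/- Let H be a bialgebra over a field k and F ∈ H ⊗ H an invertible element satisfying the cocycle condition (F ⊗ 1)·((Δ ⊗ id)F) = (1 ⊗ F)·((id ⊗ Δ)F) in H ⊗ H ⊗ H. Define the twisted comultiplication Δ_F : H → H ⊗ H by Δ_F(x) := F · Δ(x) · F⁻¹ (product taken in the algebra H ⊗ H). Then Δ_F is coassociative: (Δ_F ⊗ id)(Δ_F(x)) = (id ⊗ Δ_F)(Δ_F(x)) in H ⊗ H ⊗ H for every x ∈ H. -/

import Mathlib

open TensorProduct

noncomputable section

variable {k H : Type*} [Field k] [Ring H] [Bialgebra k H]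

/-- The twisted comultiplication `Δ_F(x) = F · Δ(x) · F⁻¹`. -/
def DeltaF (F Finv : H ⊗[k] H) : H →ₗ[k] H ⊗[k] H :=
  LinearMap.mulLeft k F ∘ₗ LinearMap.mulRight k Finv ∘ₗ Coalgebra.comul

/-- `Δ ⊗ id` as an algebra homomorphism. -/
private def G1 : H ⊗[k] H →ₐ[k] (H ⊗[k] H) ⊗[k] H :=
  Algebra.TensorProduct.map (Bialgebra.comulAlgHom k H) (AlgHom.id k H)

/-- `id ⊗ Δ` as an algebra homomorphism. -/
private def G2 : H ⊗[k] H →ₐ[k] H ⊗[k] (H ⊗[k] H) :=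
  Algebra.TensorProduct.map (AlgHom.id k H) (Bialgebra.comulAlgHom k H)

private lemma hG1 (y : H ⊗[k] H) :
    TensorProduct.map (Coalgebra.comul) (LinearMap.id) y = G1 y := by
  induction y using TensorProduct.induction_on with
  | zero => simp
  | tmul a b => rfl
  | add a b ha hb => simp [ha, hb]

private lemma hG2 (y : H ⊗[k] H) :
    TensorProduct.map (LinearMap.id) (Coalgebra.comul) y = G2 y := by
  induction y using TensorProduct.induction_on with
  | zero => simp
  | tmul a b => rfl
  | add a b ha hb => simp [ha, hb]

private lemma DeltaF_apply (F Finv : H ⊗[k] H) (x : H) :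
    DeltaF F Finv x = F * Coalgebra.comul x * Finv := by
  simp [DeltaF, mul_assoc]

private lemma mapL (F Finv : H ⊗[k] H) (y : H ⊗[k] H) :
    TensorProduct.map (DeltaF F Finv) LinearMap.id y =
      (F ⊗ₜ[k] (1 : H)) * G1 y * (Finv ⊗ₜ[k] (1 : H)) := by
  induction y using TensorProduct.induction_on with
  | zero => simp
  | tmul a b =>
      simp [G1, DeltaF_apply, Algebra.TensorProduct.tmul_mul_tmul, mul_assoc]
  | add a b ha hb => simp [ha, hb, mul_add, add_mul]

private lemma mapR (F Finv : H ⊗[k] H) (y : H ⊗[k] H) :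
    TensorProduct.map LinearMap.id (DeltaF F Finv) y =
      ((1 : H) ⊗ₜ[k] F) * G2 y * ((1 : H) ⊗ₜ[k] Finv) := by
  induction y using TensorProduct.induction_on with
  | zero => simp
  | tmul a b =>
      simp [G2, DeltaF_apply, Algebra.TensorProduct.tmul_mul_tmul, mul_assoc]
  | add a b ha hb => simp [ha, hb, mul_add, add_mul]

set_option maxHeartbeats 2000000

/-- if `F` is an invertible twist satisfying the cocycle condition, then the
twisted comultiplication `Δ_F = F Δ(·) F⁻¹` is coassociative. -/
theorem DeltaF_coassoc (F Finv : H ⊗[k] H) (hF : F * Finv = 1) (hF' : Finv * F = 1)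
    (hcocycle :
      ((F ⊗ₜ[k] (1 : H)) * TensorProduct.map Coalgebra.comul LinearMap.id F) =
        (Algebra.TensorProduct.assoc k k k H H H).symm
          (((1 : H) ⊗ₜ[k] F) * TensorProduct.map LinearMap.id Coalgebra.comul F))
    (x : H) :
    TensorProduct.map (DeltaF F Finv) LinearMap.id (DeltaF F Finv x) =
      (Algebra.TensorProduct.assoc k k k H H H).symm
        (TensorProduct.map LinearMap.id (DeltaF F Finv) (DeltaF F Finv x)) := by
  set E := (Algebra.TensorProduct.assoc k k k H H H).symm with hE
  set A : (H ⊗[k] H) ⊗[k] H := (F ⊗ₜ[k] (1 : H)) * G1 F with hA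
  set A' : (H ⊗[k] H) ⊗[k] H := G1 Finv * (Finv ⊗ₜ[k] (1 : H)) with hA'
  set B : H ⊗[k] (H ⊗[k] H) := ((1 : H) ⊗ₜ[k] F) * G2 F with hB
  set B' : H ⊗[k] (H ⊗[k] H) := G2 Finv * ((1 : H) ⊗ₜ[k] Finv) with hB'
  have hcoc : A = E B := by rw [hA, hB, ← hG1, ← hG2]; exact hcocycle
  have hAA' : A * A' = 1 := by
    rw [hA, hA']
    calc (F ⊗ₜ[k] (1 : H)) * G1 F * (G1 Finv * (Finv ⊗ₜ[k] (1 : H)))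
        = (F ⊗ₜ[k] (1 : H)) * (G1 F * G1 Finv) * (Finv ⊗ₜ[k] (1 : H)) := by
          rw [mul_assoc, mul_assoc, mul_assoc]
      _ = 1 := by
          rw [← map_mul, hF, map_one, mul_one, Algebra.TensorProduct.tmul_mul_tmul,
            hF, one_mul]
          exact Algebra.TensorProduct.one_def.symm
  have hA'A : A' * A = 1 := by
    rw [hA, hA']
    calc G1 Finv * (Finv ⊗ₜ[k] (1 : H)) * ((F ⊗ₜ[k] (1 : H)) * G1 F)
        = G1 Finv * ((Finv ⊗ₜ[k] (1 : H)) * (F ⊗ₜ[k] (1 : H))) * G1 F := by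
          rw [mul_assoc, mul_assoc, mul_assoc]
      _ = 1 := by
          rw [Algebra.TensorProduct.tmul_mul_tmul, hF', one_mul,
            show ((1 : H ⊗[k] H) ⊗ₜ[k] (1 : H)) = (1 : (H ⊗[k] H) ⊗[k] H) from rfl,
            mul_one, ← map_mul, hF', map_one]
  have hB'B : B' * B = 1 := by
    rw [hB, hB']
    calc G2 Finv * ((1 : H) ⊗ₜ[k] Finv) * (((1 : H) ⊗ₜ[k] F) * G2 F)
        = G2 Finv * (((1 : H) ⊗ₜ[k] Finv) * ((1 : H) ⊗ₜ[k] F)) * G2 F := by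
          rw [mul_assoc, mul_assoc, mul_assoc]
      _ = 1 := by
          rw [Algebra.TensorProduct.tmul_mul_tmul, hF', one_mul,
            show ((1 : H) ⊗ₜ[k] (1 : H ⊗[k] H)) = (1 : H ⊗[k] (H ⊗[k] H)) from rfl,
            mul_one, ← map_mul, hF', map_one]
  have hEB' : E B' = A' := by
    have h1 : E B' * E B = 1 := by rw [← map_mul, hB'B, map_one]
    calc E B' = E B' * (A * A') := by rw [hAA', mul_one]
      _ = (E B' * E B) * A' := by rw [hcoc, mul_assoc]
      _ = A' := by rw [h1, one_mul]
  have hmid : E (G2 (Coalgebra.comul x)) = G1 (Coalgebra.comul x) := by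
    have := Coalgebra.coassoc_symm_apply (R := k) (A := H) x
    rwa [LinearMap.lTensor, LinearMap.rTensor, hG1, hG2] at this
  rw [_root_.mapL, mapR, DeltaF_apply]
  have e1 : G1 (F * Coalgebra.comul x * Finv)
      = G1 F * G1 (Coalgebra.comul x) * G1 Finv := by rw [map_mul, map_mul]
  have e2 : G2 (F * Coalgebra.comul x * Finv)
      = G2 F * G2 (Coalgebra.comul x) * G2 Finv := by rw [map_mul, map_mul]
  rw [e1, e2]
  calc (F ⊗ₜ[k] (1 : H)) * (G1 F * G1 (Coalgebra.comul x) * G1 Finv) * (Finv ⊗ₜ[k] (1 : H))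
      = A * G1 (Coalgebra.comul x) * A' := by rw [hA, hA']; noncomm_ring
    _ = E B * E (G2 (Coalgebra.comul x)) * E B' := by rw [hcoc, hmid, hEB']
    _ = E (B * G2 (Coalgebra.comul x) * B') := by rw [← map_mul, ← map_mul]
    _ = E (((1 : H) ⊗ₜ[k] F) * (G2 F * G2 (Coalgebra.comul x) * G2 Finv) * ((1 : H) ⊗ₜ[k] Finv)) := by
        rw [hB, hB']; congr 1; noncomm_ring

end
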